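/- arXiv:0909.3821 — 2 statements merged into one kernel-verified Lean document; each statement's English description precedes it below -/
import Mathlib

section
/- Kozak's theorem: Let (A_τ)_{τ>0} ∈ E. The family (A_τ) is stable if and only if there exists a family (B_τ)_{τ>0} ∈ E such that ‖A_τ B_τ − I‖ → 0 and ‖B_τ A_τ − I‖ → 0 as τ → ∞ (that is, the coset of (A_τ) is invertible in the quotient Banach algebra E/G). -/
noncomputable section

open MeasureTheory Filter Set
open scoped ENNReal
set_option synthInstance.maxHeartbeats 1000000
set_option maxHeartbeats 1000000

/-- The Lebesgue space `L^p(ℝ)` of complex-valued functions. -/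
abbrev LpR (p : ℝ≥0∞) [Fact (1 ≤ p)] : Type :=
  Lp ℂ p (volume : Measure ℝ)

/-- The Banach algebra of bounded linear operators on `L^p(ℝ)`. -/
abbrev Bop (p : ℝ≥0∞) [Fact (1 ≤ p)] : Type :=
  LpR p →L[ℂ] LpR p

/-- The index set `{τ ∈ ℝ : τ > 0}`. -/
abbrev PosR : Type := {τ : ℝ // 0 < τ}

instance LpR.instNontrivial (p : ℝ≥0∞) [Fact (1 ≤ p)] : Nontrivial (LpR p) := by
  have hp0 : p ≠ 0 := by
    have h1 : (1 : ℝ≥0∞) ≤ p := Fact.out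
    intro h; rw [h] at h1; simp at h1
  have hμ : (volume : Measure ℝ) (Set.Ioo (0 : ℝ) 1) = 1 := by simp
  have hμ' : (volume : Measure ℝ) (Set.Ioo (0 : ℝ) 1) ≠ ∞ := by simp [hμ]
  refine ⟨⟨MeasureTheory.indicatorConstLp p measurableSet_Ioo hμ' (1 : ℂ), 0, fun h => ?_⟩⟩
  have hn := MeasureTheory.norm_indicatorConstLp' (p := p) (hs := measurableSet_Ioo)
    (hμs := hμ') (c := (1 : ℂ)) hp0 (by simp [hμ])
  rw [h] at hn
  simp [hμ] at hn

/-- The Banach algebra `E` of bounded families `(A_τ)_{τ>0}` of bounded operators on `L^p(ℝ)`,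
with pointwise operations and supremum norm. -/
abbrev Efam (p : ℝ≥0∞) [Fact (1 ≤ p)] : Type :=
  lp (fun _ : PosR => Bop p) ∞

/-- The oscillation `osc(f, I) = sup_{t,s ∈ I} |f(t) - f(s)|`. -/
def osc (f : ℝ → ℂ) (I : Set ℝ) : ℝ :=
  sSup ((fun q : ℝ × ℝ => ‖f q.1 - f q.2‖) '' (I ×ˢ I))

/-- The set `SO` of (bounded continuous) slowly oscillating functions. -/
def SOset : Set (ℝ → ℂ) :=
  {f | Continuous f ∧ (∃ M : ℝ, ∀ x : ℝ, ‖f x‖ ≤ M) ∧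
    Tendsto (fun x : ℝ => osc f (Icc (-(2 * x)) (-x) ∪ Icc x (2 * x))) atTop (nhds 0)}

/-- The set `SO¹` of slowly oscillating functions that are continuously differentiable with
bounded derivative and satisfy `x f'(x) → 0` as `|x| → ∞`. -/
def SO1set : Set (ℝ → ℂ) :=
  {f | f ∈ SOset ∧ ContDiff ℝ 1 f ∧ (∃ M : ℝ, ∀ x : ℝ, ‖deriv f x‖ ≤ M) ∧
    Tendsto (fun x : ℝ => x • deriv f x) (cocompact ℝ) (nhds 0)}

/-- `IsFourierL2 sgn F` says that the bounded operator `F` on `L²(ℝ)` is the continuous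
extension of the Fourier integral `φ ↦ (2π)^{-1/2} ∫ e^{sgn·i·x·y} φ(y) dy`
(for `sgn = 1` this is the Fourier transform of the paper, for `sgn = -1` its inverse). -/
def IsFourierL2 (sgn : ℝ) (F : LpR 2 →L[ℂ] LpR 2) : Prop :=
  ∀ (φ : ℝ → ℂ), Integrable φ volume → ∀ h2 : MemLp φ 2 volume,
    (F (h2.toLp φ) : ℝ → ℂ) =ᵐ[volume]
      fun x : ℝ => ((Real.sqrt (2 * Real.pi))⁻¹ : ℂ) *
        ∫ y : ℝ, Complex.exp (Complex.I * (sgn * x * y)) * φ y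

/-- `IsConvOp p a W` says that `W = W⁰(a) = F⁻¹ a F` is the bounded extension to `L^p(ℝ)` of the
Fourier multiplier with symbol `a`, i.e. `a` is a Fourier multiplier on `L^p(ℝ)` and `W` is the
associated convolution operator. -/
def IsConvOp (p : ℝ≥0∞) [Fact (1 ≤ p)] (a : ℝ → ℂ) (W : Bop p) : Prop :=
  ∃ Ft Fi : LpR 2 →L[ℂ] LpR 2, IsFourierL2 1 Ft ∧ IsFourierL2 (-1) Fi ∧
    ∀ (φ : ℝ → ℂ) (h2 : MemLp φ 2 volume) (hp : MemLp φ p volume),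
      ∃ ψ : LpR 2,
        (ψ : ℝ → ℂ) =ᵐ[volume] (fun x : ℝ => a x * (Ft (h2.toLp φ) : ℝ → ℂ) x) ∧
        (W (hp.toLp φ) : ℝ → ℂ) =ᵐ[volume] (Fi ψ : ℝ → ℂ)

/-- `a ∈ M_p`: `a` is a Fourier multiplier on `L^p(ℝ)`. -/
def MemMp (p : ℝ≥0∞) [Fact (1 ≤ p)] (a : ℝ → ℂ) : Prop :=
  ∃ W : Bop p, IsConvOp p a W

/-- The closure of a set `S` of functions in the norm of the multiplier algebra `M_p`
(the norm being `‖a‖_{M_p} = ‖W⁰(a)‖`). -/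
def MpClosure (p : ℝ≥0∞) [Fact (1 ≤ p)] (S : Set (ℝ → ℂ)) : Set (ℝ → ℂ) :=
  {a | ∃ W : Bop p, IsConvOp p a W ∧
    ∀ ε : ℝ, 0 < ε → ∃ b ∈ S, ∃ Wb : Bop p, IsConvOp p b Wb ∧ ‖W - Wb‖ < ε}

/-- `SO_p`, the closure of `SO¹` in the norm of `M_p`. -/
def SOp (p : ℝ≥0∞) [Fact (1 ≤ p)] : Set (ℝ → ℂ) :=
  MpClosure p SO1set

/-- Piecewise constant functions on `ℝ` with at most finitely many jumps. -/
def IsPiecewiseConst (a : ℝ → ℂ) : Prop :=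
  ∃ s : Finset ℝ, ∀ x y : ℝ, x < y → (∀ z ∈ s, z ≤ x ∨ y ≤ z) → a x = a y

/-- `PC_p`, the closure in `M_p` of the piecewise constant functions with finitely many jumps. -/
def PCp (p : ℝ≥0∞) [Fact (1 ≤ p)] : Set (ℝ → ℂ) :=
  MpClosure p {a | IsPiecewiseConst a}

/-- `[PC_p, SO_p]`, the smallest closed subalgebra of `M_p` containing `PC_p` and `SO_p`:
the closure in the `M_p` norm of the (pointwise) subalgebra generated by `PC_p ∪ SO_p`. -/
def PCSOp (p : ℝ≥0∞) [Fact (1 ≤ p)] : Set (ℝ → ℂ) :=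
  MpClosure p ((Algebra.adjoin ℂ (PCp p ∪ SOp p) : Subalgebra ℂ (ℝ → ℂ)) : Set (ℝ → ℂ))

/-- `PC`: functions possessing finite one-sided limits at every point of `ℝ` and finite
limits at `±∞`. -/
def PCset : Set (ℝ → ℂ) :=
  {a | (∀ x : ℝ, ∃ l : ℂ, Tendsto a (nhdsWithin x (Iio x)) (nhds l)) ∧
       (∀ x : ℝ, ∃ l : ℂ, Tendsto a (nhdsWithin x (Ioi x)) (nhds l)) ∧
       (∃ l : ℂ, Tendsto a atBot (nhds l)) ∧ (∃ l : ℂ, Tendsto a atTop (nhds l))}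

/-- `C(ℝ̇)`: continuous functions having equal finite limits at `-∞` and `+∞`. -/
def CdotR : Set (ℝ → ℂ) :=
  {f | Continuous f ∧ ∃ l : ℂ, Tendsto f atBot (nhds l) ∧ Tendsto f atTop (nhds l)}

/-- The complex indicator function of a set of reals. -/
def chiC (s : Set ℝ) : ℝ → ℂ :=
  s.indicator fun _ => (1 : ℂ)

/-- `T` is the operator of multiplication by the function `a` on `L^p(ℝ)`. -/
def IsMulOp (p : ℝ≥0∞) [Fact (1 ≤ p)] (a : ℝ → ℂ) (T : Bop p) : Prop :=
  ∀ f : LpR p, (T f : ℝ → ℂ) =ᵐ[volume] fun x : ℝ => a x * f x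

/-- `V` is the shift operator `(V f)(x) = f(x - t)` on `L^p(ℝ)`. -/
def IsShiftOp (p : ℝ≥0∞) [Fact (1 ≤ p)] (t : ℝ) (V : Bop p) : Prop :=
  ∀ f : LpR p, (V f : ℝ → ℂ) =ᵐ[volume] fun x : ℝ => f (x - t)

/-- `Z` is the dilation operator `(Z f)(x) = τ^{-1/p} f(x/τ)` on `L^p(ℝ)`. -/
def IsDilationOp (p : ℝ≥0∞) [Fact (1 ≤ p)] (τ : ℝ) (Z : Bop p) : Prop :=
  ∀ f : LpR p, (Z f : ℝ → ℂ) =ᵐ[volume]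
    fun x : ℝ => ((τ ^ (-(1 / p.toReal)) : ℝ) : ℂ) * f (x / τ)

/-- `U` is the operator of multiplication by `e^{iηx}` on `L^p(ℝ)`. -/
def IsModOp (p : ℝ≥0∞) [Fact (1 ≤ p)] (η : ℝ) (U : Bop p) : Prop :=
  ∀ f : LpR p, (U f : ℝ → ℂ) =ᵐ[volume]
    fun x : ℝ => Complex.exp (Complex.I * (η * x)) * f x

/-- Constant family in `E`. -/
def constE (p : ℝ≥0∞) [Fact (1 ≤ p)] (T : Bop p) : Efam p :=
  ⟨fun _ => T, memℓp_infty ⟨‖T‖, by rintro x ⟨i, rfl⟩; exact le_rfl⟩⟩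

/-- `*`-strong convergence of a family `(A_τ)_{τ>0}` of operators on `L^p(ℝ)` to `L` as
`τ → +∞`: strong convergence together with strong convergence of the dual operators on the
dual space. -/
def StarStrongLim (p : ℝ≥0∞) [Fact (1 ≤ p)] (A : PosR → Bop p) (L : Bop p) : Prop :=
  (∀ f : LpR p, Tendsto (fun τ : PosR => A τ f) atTop (nhds (L f))) ∧
  (∀ φ : StrongDual ℂ (LpR p),
    Tendsto (fun τ : PosR => φ.comp (A τ)) atTop (nhds (φ.comp L)))

/-- Membership in the ideal `G ⊆ E` of families tending to zero in norm. -/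
def MemG (p : ℝ≥0∞) [Fact (1 ≤ p)] (A : Efam p) : Prop :=
  Tendsto (fun τ : PosR => ‖A τ‖) atTop (nhds 0)

/-- Membership in the algebra `F ⊆ E` (relative to the family `V` of shift operators):
`(A_τ)`, `(V_{-τ} A_τ V_τ)` and `(V_τ A_τ V_{-τ})` converge `*`-strongly as `τ → +∞`. -/
def MemF (p : ℝ≥0∞) [Fact (1 ≤ p)] (V : ℝ → Bop p) (A : Efam p) : Prop :=
  (∃ L : Bop p, StarStrongLim p (fun τ : PosR => A τ) L) ∧
  (∃ L : Bop p, StarStrongLim p (fun τ : PosR => V (-(τ : ℝ)) * A τ * V (τ : ℝ)) L) ∧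
  (∃ L : Bop p, StarStrongLim p (fun τ : PosR => V (τ : ℝ) * A τ * V (-(τ : ℝ))) L)

/-- Membership in the ideal `J`: families of the form
`V_τ K₁ V_{-τ} + K₀ + V_{-τ} K_{-1} V_τ + G_τ` with `Km1, K₀, K₁` compact and `(G_τ) ∈ G`. -/
def MemJ (p : ℝ≥0∞) [Fact (1 ≤ p)] (V : ℝ → Bop p) (A : Efam p) : Prop :=
  ∃ K₁ K₀ Km1 : Bop p,
    IsCompactOperator (⇑K₁) ∧ IsCompactOperator (⇑K₀) ∧ IsCompactOperator (⇑Km1) ∧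
    ∃ G : Efam p, MemG p G ∧
      ∀ τ : PosR, A τ =
        V (τ : ℝ) * K₁ * V (-(τ : ℝ)) + K₀ + V (-(τ : ℝ)) * Km1 * V (τ : ℝ) + G τ

/-- Membership in the algebra `L ⊆ F` of sequences of local type. -/
def MemL (p : ℝ≥0∞) [Fact (1 ≤ p)] (V : ℝ → Bop p) (A : Efam p) : Prop :=
  MemF p V A ∧
  (∀ f ∈ CdotR, ∀ Mf : Bop p, IsMulOp p f Mf →
    MemJ p V (A * constE p Mf - constE p Mf * A)) ∧
  (∀ g ∈ SOp p, ∀ Wg : Bop p, IsConvOp p g Wg →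
    MemJ p V (A * constE p Wg - constE p Wg * A))

/-- Stability of a family in `E`. -/
def IsStableE (p : ℝ≥0∞) [Fact (1 ≤ p)] (A : Efam p) : Prop :=
  ∃ τ₀ : ℝ, 0 < τ₀ ∧ ∃ C : ℝ, ∀ τ : PosR, τ₀ < (τ : ℝ) →
    ∃ B : Bop p, A τ * B = 1 ∧ B * A τ = 1 ∧ ‖B‖ ≤ C

/-- Stability of a family of operators indexed by `ℝ` (conditions only for `τ > τ₀`). -/
def IsStableFam (p : ℝ≥0∞) [Fact (1 ≤ p)] (A : ℝ → Bop p) : Prop :=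
  ∃ τ₀ : ℝ, 0 < τ₀ ∧ ∃ C : ℝ, ∀ τ : ℝ, τ₀ < τ →
    ∃ B : Bop p, A τ * B = 1 ∧ B * A τ = 1 ∧ ‖B‖ ≤ C

/-- The smallest closed unital subalgebra of `E` containing a set `S`. -/
def ClosedSubalgE (p : ℝ≥0∞) [Fact (1 ≤ p)] (S : Set (Efam p)) : Set (Efam p) :=
  ⋂₀ {T : Set (Efam p) | S ⊆ T ∧ IsClosed T ∧ (1 : Efam p) ∈ T ∧
    (∀ x ∈ T, ∀ y ∈ T, x + y ∈ T) ∧ (∀ x ∈ T, ∀ y ∈ T, x * y ∈ T) ∧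
    (∀ c : ℂ, ∀ x ∈ T, c • x ∈ T)}

/-- The smallest closed two-sided ideal of a (closed) subalgebra `Lset ⊆ E` containing `S`. -/
def ClosedIdealIn (p : ℝ≥0∞) [Fact (1 ≤ p)] (Lset S : Set (Efam p)) : Set (Efam p) :=
  ⋂₀ {T : Set (Efam p) | S ⊆ T ∧ T ⊆ Lset ∧ IsClosed T ∧
    (∀ x ∈ T, ∀ y ∈ T, x + y ∈ T) ∧ (∀ c : ℂ, ∀ x ∈ T, c • x ∈ T) ∧
    (∀ a ∈ Lset, ∀ x ∈ T, a * x ∈ T ∧ x * a ∈ T)}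

/-- The generating set of the algebra `A`: the constant families `(aI)` with `a ∈ PC`,
the constant families `(W⁰(b))` with `b ∈ [PC_p, SO_p]`, and the family `(P_τ)` of
multiplications by the indicators of `(-τ, τ)`. -/
def genSetA (p : ℝ≥0∞) [Fact (1 ≤ p)] : Set (Efam p) :=
  {A : Efam p | ∃ a ∈ PCset, ∀ τ : PosR, IsMulOp p a (A τ)} ∪
  {A : Efam p | ∃ b ∈ PCSOp p, ∀ τ : PosR, IsConvOp p b (A τ)} ∪
  {A : Efam p | ∀ τ : PosR, IsMulOp p (chiC (Ioo (-(τ : ℝ)) (τ : ℝ))) (A τ)}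

/-- Membership in the algebra `A`, the smallest closed subalgebra of `E` containing all
`(aI)` with `a ∈ PC`, all `(W⁰(b))` with `b ∈ [PC_p, SO_p]`, and `(P_τ)`. -/
def MemAlgA (p : ℝ≥0∞) [Fact (1 ≤ p)] (A : Efam p) : Prop :=
  A ∈ ClosedSubalgE p (genSetA p)

/-- A character of the commutative unital C*-algebra `SO` belonging to the fiber
`M_∞(SO)`: a unital multiplicative linear functional annihilating every `f ∈ SO`
vanishing at infinity (modelled as a total function on `ℝ → ℂ` with the character
properties required on `SO`). -/
def IsCharInftySO (χ : (ℝ → ℂ) → ℂ) : Prop :=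
  (∀ f ∈ SOset, ∀ g ∈ SOset, χ (f + g) = χ f + χ g) ∧
  (∀ f ∈ SOset, ∀ g ∈ SOset, χ (f * g) = χ f * χ g) ∧
  (∀ c : ℂ, ∀ f ∈ SOset, χ (c • f) = c * χ f) ∧
  χ 1 = 1 ∧
  (∀ f ∈ SOset, Tendsto f (cocompact ℝ) (nhds 0) → χ f = 0)

/-- The parametrization `f_s` of the circular arc `𝔄_s(0,1)`. -/
def arcFun (s : ℝ) (μ : ℝ) : ℂ :=
  if s = 2 then (μ : ℂ)
  else ((Real.sin (Real.pi * μ - 2 * Real.pi * μ / s) / Real.sin (Real.pi - 2 * Real.pi / s) : ℝ) : ℂ) *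
    Complex.exp (Complex.I * (((Real.pi - 2 * Real.pi / s) * (μ - 1) : ℝ) : ℂ))

/-- The lentiform domain `𝔏_p`, the union of the arcs `𝔄_s(0,1)` for
`s ∈ [min{p,q}, max{p,q}]`, `q = p/(p-1)`. -/
def lens (p : ℝ) : Set ℂ :=
  ⋃ s ∈ Icc (min p (p / (p - 1))) (max p (p / (p - 1))), arcFun s '' Icc (0 : ℝ) 1


lemma Efam.eval_mul_sub_one (p : ℝ≥0∞) [Fact (1 ≤ p)] (A B : Efam p) (τ : PosR) :
    (A * B - 1 : Efam p) τ = A τ * B τ - 1 := by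
  have h1 : ⇑(A * B - 1 : Efam p) = ⇑(A * B : Efam p) - ⇑(1 : Efam p) := lp.coeFn_sub _ _
  have h2 : ⇑(A * B : Efam p) = ⇑A * ⇑B := lp.infty_coeFn_mul A B
  have h3 : ⇑(1 : Efam p) = 1 := lp.infty_coeFn_one
  have := congrFun h1 τ
  rw [h2, h3] at this
  simpa using this

theorem statement6 (p : ℝ≥0∞) [Fact (1 ≤ p)] (hp : 1 < p) (hp' : p ≠ ∞) (A : Efam p) :
    IsStableE p A ↔
      ∃ B : Efam p,
        Tendsto (fun τ : PosR => ‖(A * B - 1 : Efam p) τ‖) atTop (nhds 0) ∧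
        Tendsto (fun τ : PosR => ‖(B * A - 1 : Efam p) τ‖) atTop (nhds 0) := by
  constructor
  · rintro ⟨τ₀, hτ₀, C, hC⟩
    have hBfun : ∀ τ : PosR, τ₀ < (τ : ℝ) → ∃ B : Bop p,
        A τ * B = 1 ∧ B * A τ = 1 ∧ ‖B‖ ≤ C := hC
    classical
    set Bfun : PosR → Bop p := fun τ =>
      if h : τ₀ < (τ : ℝ) then (hBfun τ h).choose else 0 with hBdef
    have hbound : ∀ τ : PosR, ‖Bfun τ‖ ≤ max C 0 := by
      intro τ
      by_cases h : τ₀ < (τ : ℝ)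
      · simp only [hBdef, dif_pos h]
        exact le_trans (hBfun τ h).choose_spec.2.2 (le_max_left _ _)
      · simp [hBdef, dif_neg h]
    refine ⟨⟨Bfun, memℓp_infty ⟨max C 0, by rintro x ⟨τ, rfl⟩; exact hbound τ⟩⟩, ?_, ?_⟩ <;>
    · haveI : Nonempty PosR := ⟨⟨1, one_pos⟩⟩
      have hev : ∀ᶠ τ : PosR in atTop, τ₀ < (τ : ℝ) := by
        refine eventually_atTop.2 ⟨⟨max τ₀ 0 + 1, by positivity⟩, fun τ hτ => ?_⟩
        have : (max τ₀ 0 + 1 : ℝ) ≤ (τ : ℝ) := Subtype.coe_le_coe.2 hτ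
        have h0 : τ₀ ≤ max τ₀ 0 := le_max_left _ _
        linarith
      refine tendsto_const_nhds.congr' ?_
      filter_upwards [hev] with τ hτ
      have hspec := (hBfun τ hτ).choose_spec
      have hB : Bfun τ = (hBfun τ hτ).choose := dif_pos hτ
      first
        | (rw [Efam.eval_mul_sub_one]
           show (0:ℝ) = ‖A τ * Bfun τ - 1‖
           rw [hB, hspec.1]; simp)
        | (have h := Efam.eval_mul_sub_one p
              (⟨Bfun, memℓp_infty ⟨max C 0, by rintro x ⟨τ', rfl⟩; exact hbound τ'⟩⟩ : Efam p) A τ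
           rw [h]
           show (0:ℝ) = ‖Bfun τ * A τ - 1‖
           rw [hB, hspec.2.1]; simp)
  · rintro ⟨B, h1, h2⟩
    haveI : Nonempty PosR := ⟨⟨1, one_pos⟩⟩
    have e1 : ∀ᶠ τ : PosR in atTop, ‖(A * B - 1 : Efam p) τ‖ < 1/2 :=
      h1.eventually (Filter.Tendsto.eventually_lt_const (by norm_num) tendsto_id)
    have e2 : ∀ᶠ τ : PosR in atTop, ‖(B * A - 1 : Efam p) τ‖ < 1/2 :=
      h2.eventually (Filter.Tendsto.eventually_lt_const (by norm_num) tendsto_id)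
    obtain ⟨τ₁, hτ₁⟩ := eventually_atTop.1 (e1.and e2)
    refine ⟨(τ₁ : ℝ), τ₁.2, 2 * ‖B‖, fun τ hτ => ?_⟩
    obtain ⟨ht1, ht2⟩ := hτ₁ τ (Subtype.coe_le_coe.1 hτ.le)
    rw [Efam.eval_mul_sub_one] at ht1
    rw [Efam.eval_mul_sub_one] at ht2
    set t : Bop p := 1 - A τ * B τ with htdef
    set s : Bop p := 1 - B τ * A τ with hsdef
    have hts : ‖t‖ < 1/2 := by rw [htdef, norm_sub_rev]; exact ht1
    have hss : ‖s‖ < 1/2 := by rw [hsdef, norm_sub_rev]; exact ht2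
    have ht' : ‖t‖ < 1 := lt_trans hts (by norm_num)
    have hs' : ‖s‖ < 1 := lt_trans hss (by norm_num)
    set u : (Bop p)ˣ := Units.oneSub t ht' with hudef
    set v : (Bop p)ˣ := Units.oneSub s hs' with hvdef
    have hu : (u : Bop p) = A τ * B τ := by
      rw [hudef, Units.val_oneSub, htdef, sub_sub_cancel]
    have hv : (v : Bop p) = B τ * A τ := by
      rw [hvdef, Units.val_oneSub, hsdef, sub_sub_cancel]
    set Binv : Bop p := B τ * ↑u⁻¹ with hBinvdef
    have hr : A τ * Binv = 1 := by
      rw [hBinvdef, ← mul_assoc, ← hu]; exact u.mul_inv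
    have hl : (↑v⁻¹ * B τ) * A τ = 1 := by
      rw [mul_assoc, ← hv]; exact v.inv_mul
    have hBinveq : Binv = ↑v⁻¹ * B τ := by
      calc Binv = 1 * Binv := (one_mul _).symm
        _ = ((↑v⁻¹ * B τ) * A τ) * Binv := by rw [hl]
        _ = (↑v⁻¹ * B τ) * (A τ * Binv) := by rw [mul_assoc]
        _ = ↑v⁻¹ * B τ := by rw [hr, mul_one]
    have hl' : Binv * A τ = 1 := by rw [hBinveq]; exact hl
    -- norm bound on u⁻¹
    have hkey : (↑u⁻¹ : Bop p) = 1 + t * ↑u⁻¹ := by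
      have h := u.mul_inv
      rw [hudef, Units.val_oneSub] at h
      rw [sub_mul, one_mul] at h
      exact (eq_add_of_sub_eq h).trans (by rw [hudef])
    have hninv : ‖(↑u⁻¹ : Bop p)‖ ≤ 2 := by
      have hx : ‖(↑u⁻¹ : Bop p)‖ ≤ 1 + ‖t‖ * ‖(↑u⁻¹ : Bop p)‖ := by
        calc ‖(↑u⁻¹ : Bop p)‖ = ‖(1 : Bop p) + t * ↑u⁻¹‖ := by rw [← hkey]
          _ ≤ ‖(1 : Bop p)‖ + ‖t * (↑u⁻¹ : Bop p)‖ := norm_add_le _ _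
          _ ≤ 1 + ‖t‖ * ‖(↑u⁻¹ : Bop p)‖ := by
              gcongr
              · exact norm_one.le
              · exact norm_mul_le _ _
      nlinarith [norm_nonneg (↑u⁻¹ : Bop p), norm_nonneg t]
    refine ⟨Binv, hr, hl', ?_⟩
    calc ‖Binv‖ ≤ ‖B τ‖ * ‖(↑u⁻¹ : Bop p)‖ := norm_mul_le _ _
      _ ≤ ‖B‖ * 2 := by
          have := lp.norm_apply_le_norm ENNReal.top_ne_zero B τ
          exact mul_le_mul this hninv (norm_nonneg _) (norm_nonneg _)
      _ = 2 * ‖B‖ := mul_comm _ _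


end
end

section
/- The algebra F is inverse closed in E: if (A_τ) ∈ F, every A_τ is invertible, and sup_{τ>0} ‖A_τ^{−1}‖ < ∞, then (A_τ^{−1}) ∈ F. Moreover F/G is inverse closed in E/G: if (A_τ) ∈ F and there exists (B_τ) ∈ E with ‖A_τ B_τ − I‖ → 0 and ‖B_τ A_τ − I‖ → 0 as τ → ∞, then there exists (B'_τ) ∈ F with ‖A_τ B'_τ − I‖ → 0 and ‖B'_τ A_τ − I‖ → 0. -/
noncomputable section

open MeasureTheory Filter Set
open scoped ENNReal
set_option synthInstance.maxHeartbeats 1000000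
set_option maxHeartbeats 1000000

/-! ### Auxiliary material for `statement7` -/

instance PosR.instNonempty : Nonempty PosR := ⟨⟨1, one_pos⟩⟩

instance PosR.instNoMaxOrder : NoMaxOrder PosR :=
  ⟨fun a => ⟨⟨a.1 + 1, by have := a.2; linarith⟩, by
    change (a : ℝ) < a.1 + 1
    linarith⟩⟩

/-- Core lemma: if `A τ → L` *-strongly and `B τ` is eventually a uniformly bounded
two-sided inverse of `A τ`, then `B τ` converges *-strongly. -/
theorem core_lemma {p : ℝ≥0∞} [Fact (1 ≤ p)]
    (A B : PosR → Bop p) (L : Bop p) (C : ℝ)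
    (h : StarStrongLim p A L)
    (hB : ∀ᶠ τ : PosR in atTop, A τ * B τ = 1 ∧ B τ * A τ = 1 ∧ ‖B τ‖ ≤ C) :
    ∃ M : Bop p, StarStrongLim p B M := by
  classical
  have hC : 0 ≤ C := by
    obtain ⟨τ, _, _, h3⟩ := hB.exists
    exact le_trans (norm_nonneg _) h3
  -- uniform lower bound for `L`
  have hlow : ∀ f : LpR p, ‖f‖ ≤ C * ‖L f‖ := by
    intro f
    refine ge_of_tendsto ((h.1 f).norm.const_mul C) ?_
    filter_upwards [hB] with τ hτ
    obtain ⟨h1, h2, h3⟩ := hτ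
    calc ‖f‖ = ‖B τ (A τ f)‖ := by
          rw [← ContinuousLinearMap.mul_apply, h2, ContinuousLinearMap.one_apply]
      _ ≤ ‖B τ‖ * ‖A τ f‖ := ContinuousLinearMap.le_opNorm _ _
      _ ≤ C * ‖A τ f‖ := mul_le_mul_of_nonneg_right h3 (norm_nonneg _)
  -- uniform lower bound for the dual of `L`
  have hlowd : ∀ φ : StrongDual ℂ (LpR p), ‖φ‖ ≤ C * ‖φ.comp L‖ := by
    intro φ
    refine ge_of_tendsto ((h.2 φ).norm.const_mul C) ?_
    filter_upwards [hB] with τ hτ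
    obtain ⟨h1, h2, h3⟩ := hτ
    have e1 : (φ.comp (A τ)).comp (B τ) = φ := by
      ext g
      simp only [ContinuousLinearMap.comp_apply]
      rw [← ContinuousLinearMap.mul_apply (A τ) (B τ), h1, ContinuousLinearMap.one_apply]
    calc ‖φ‖ = ‖(φ.comp (A τ)).comp (B τ)‖ := by rw [e1]
      _ ≤ ‖φ.comp (A τ)‖ * ‖B τ‖ := ContinuousLinearMap.opNorm_comp_le _ _
      _ ≤ ‖φ.comp (A τ)‖ * C := mul_le_mul_of_nonneg_left h3 (norm_nonneg _)
      _ = C * ‖φ.comp (A τ)‖ := mul_comm _ _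
  -- `L` is injective
  have hinj : Function.Injective ⇑L := by
    intro x y hxy
    have hx : ‖x - y‖ ≤ C * ‖L (x - y)‖ := hlow _
    rw [map_sub, hxy, sub_self, norm_zero, mul_zero] at hx
    exact sub_eq_zero.mp (norm_le_zero_iff.mp hx)
  -- `L` has closed range
  have hanti : AntilipschitzWith C.toNNReal ⇑L :=
    ContinuousLinearMap.antilipschitz_of_bound L fun x => by
      rw [Real.coe_toNNReal C hC]; exact hlow x
  have hclosed : IsClosed (Set.range ⇑L) := hanti.isClosed_range L.uniformContinuous
  -- `L` is surjective
  have hsurj : Function.Surjective ⇑L := by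
    intro y
    by_contra hy
    have hy' : y ∉ Set.range ⇑L := fun hmem => hy hmem
    have hconv : Convex ℝ (Set.range ⇑L) := by
      have h1 := ((LinearMap.range (L : LpR p →ₗ[ℂ] LpR p)).restrictScalars ℝ).convex
      rwa [Submodule.coe_restrictScalars, LinearMap.coe_range] at h1
    obtain ⟨f, u, hfu, huy⟩ := geometric_hahn_banach_closed_point hconv hclosed hy'
    have hu0 : 0 < u := by
      have h0 := hfu 0 ⟨0, map_zero _⟩
      rwa [map_zero] at h0
    have hf0 : ∀ z : LpR p, f (L z) = 0 := by
      intro z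
      by_contra h0
      have hmem : (u / f (L z)) • L z ∈ Set.range ⇑L := by
        have hz : L z ∈ (LinearMap.range (L : LpR p →ₗ[ℂ] LpR p)).restrictScalars ℝ := by
          simp [LinearMap.mem_range]
        have h2 := Submodule.smul_mem ((LinearMap.range (L : LpR p →ₗ[ℂ] LpR p)).restrictScalars ℝ)
          (u / f (L z)) hz
        rw [Submodule.restrictScalars_mem, LinearMap.mem_range] at h2
        obtain ⟨w, hw⟩ := h2
        exact ⟨w, hw⟩
      have h3 := hfu _ hmem
      rw [_root_.map_smul f, smul_eq_mul, div_mul_cancel₀ _ h0] at h3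
      exact lt_irrefl u h3
    -- complexify the functional
    set φ : LpR p →L[ℂ] ℂ := StrongDual.extendRCLike f with hφdef
    have hφL : φ.comp L = 0 := by
      ext z
      rw [ContinuousLinearMap.comp_apply, ContinuousLinearMap.zero_apply, hφdef,
        StrongDual.extendRCLike_apply]
      have e1 : (RCLike.I : ℂ) • L z = L ((RCLike.I : ℂ) • z) := (map_smul L _ _).symm
      rw [e1, hf0, hf0]
      simp
    have hφ0 : φ = 0 := by
      have := hlowd φ
      rw [hφL, norm_zero, mul_zero] at this
      exact norm_le_zero_iff.mp this
    have hfy : f y = 0 := by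
      have h1 : φ y = 0 := by rw [hφ0]; rfl
      rw [hφdef, StrongDual.extendRCLike_apply] at h1
      have h2 := congrArg Complex.re h1
      simpa [Complex.ext_iff] using h2
    rw [hfy] at huy
    exact absurd (hu0.trans huy) (lt_irrefl 0)
  -- construct the inverse of `L`
  have hker : L.ker = ⊥ := (LinearMap.ker_eq_bot (f := (L : LpR p →ₗ[ℂ] LpR p))).mpr hinj
  have hrange : L.range = ⊤ := (LinearMap.range_eq_top (f := (L : LpR p →ₗ[ℂ] LpR p))).mpr hsurj
  set M := ContinuousLinearEquiv.ofBijective L hker hrange with hMdef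
  have hMapp : ∀ x : LpR p, M x = L x := fun x =>
    congrFun (ContinuousLinearEquiv.coeFn_ofBijective L hker hrange) x
  set N : Bop p := (M.symm : LpR p →L[ℂ] LpR p) with hNdef
  have hLN : ∀ g : LpR p, L (N g) = g := by
    intro g
    have := M.apply_symm_apply g
    rwa [hMapp] at this
  have hNL : ∀ g : LpR p, N (L g) = g := fun g => by
    have h1 := M.symm_apply_apply g
    rw [hMapp] at h1
    exact h1
  refine ⟨N, ?_, ?_⟩
  · -- strong convergence of `B τ` to `N`
    intro g
    rw [tendsto_iff_norm_sub_tendsto_zero]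
    have key : Tendsto (fun τ : PosR => C * ‖g - A τ (N g)‖) atTop (nhds 0) := by
      have h1 : Tendsto (fun τ : PosR => A τ (N g)) atTop (nhds g) := by
        have := h.1 (N g); rwa [hLN g] at this
      have h2 : Tendsto (fun τ : PosR => ‖g - A τ (N g)‖) atTop (nhds 0) := by
        have h3 := (tendsto_const_nhds (x := g) (f := atTop (α := PosR))).sub h1
        rw [sub_self] at h3
        simpa using h3.norm
      simpa using h2.const_mul C
    refine squeeze_zero' (Eventually.of_forall fun τ => norm_nonneg _) ?_ key
    filter_upwards [hB] with τ hτ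
    obtain ⟨h1, h2, h3⟩ := hτ
    have e1 : B τ g - N g = B τ (g - A τ (N g)) := by
      rw [map_sub]
      congr 1
      rw [← ContinuousLinearMap.mul_apply, h2, ContinuousLinearMap.one_apply]
    rw [e1]
    calc ‖B τ (g - A τ (N g))‖ ≤ ‖B τ‖ * ‖g - A τ (N g)‖ := ContinuousLinearMap.le_opNorm _ _
      _ ≤ C * ‖g - A τ (N g)‖ := mul_le_mul_of_nonneg_right h3 (norm_nonneg _)
  · -- dual convergence
    intro φ
    rw [tendsto_iff_norm_sub_tendsto_zero]
    set ψ : StrongDual ℂ (LpR p) := φ.comp N with hψdef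
    have key : Tendsto (fun τ : PosR => ‖ψ.comp (A τ) - ψ.comp L‖ * C) atTop (nhds 0) := by
      have h2 := tendsto_iff_norm_sub_tendsto_zero.mp (h.2 ψ)
      simpa using h2.mul_const C
    refine squeeze_zero' (Eventually.of_forall fun τ => norm_nonneg _) ?_ key
    filter_upwards [hB] with τ hτ
    obtain ⟨h1, h2, h3⟩ := hτ
    have heq : φ.comp (B τ) - φ.comp N = (ψ.comp L - ψ.comp (A τ)).comp (B τ) := by
      ext g
      have e1 : A τ (B τ g) = g := by
        rw [← ContinuousLinearMap.mul_apply, h1, ContinuousLinearMap.one_apply]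
      simp only [ContinuousLinearMap.sub_apply, ContinuousLinearMap.comp_apply, e1, hψdef]
      rw [hNL (B τ g)]
    rw [heq]
    calc ‖(ψ.comp L - ψ.comp (A τ)).comp (B τ)‖
        ≤ ‖ψ.comp L - ψ.comp (A τ)‖ * ‖B τ‖ := ContinuousLinearMap.opNorm_comp_le _ _
      _ ≤ ‖ψ.comp L - ψ.comp (A τ)‖ * C := mul_le_mul_of_nonneg_left h3 (norm_nonneg _)
      _ = ‖ψ.comp (A τ) - ψ.comp L‖ * C := by rw [norm_sub_rev]
/-- The shift operators satisfy `V t * V (-t) = 1`. -/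
theorem shift_inv {p : ℝ≥0∞} [Fact (1 ≤ p)] (V : ℝ → Bop p)
    (hV : ∀ t : ℝ, IsShiftOp p t (V t)) (t : ℝ) : V t * V (-t) = 1 := by
  ext f
  rw [ContinuousLinearMap.mul_apply, ContinuousLinearMap.one_apply]
  have h1 := hV t (V (-t) f)
  have h2 := hV (-t) f
  have h3 := h2.comp_tendsto
    ((measurePreserving_sub_right (volume : Measure ℝ) t).quasiMeasurePreserving.tendsto_ae)
  have h4 : (fun x : ℝ => (f : ℝ → ℂ) (x - t - -t)) =ᶠ[ae (volume : Measure ℝ)] (f : ℝ → ℂ) :=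
    Eventually.of_forall fun x => by norm_num
  exact h1.trans (h3.trans h4)
/-- The shift operators are contractions (in fact isometries). -/
theorem shift_norm_le {p : ℝ≥0∞} [Fact (1 ≤ p)] (V : ℝ → Bop p)
    (hV : ∀ t : ℝ, IsShiftOp p t (V t)) (t : ℝ) : ‖V t‖ ≤ 1 := by
  refine ContinuousLinearMap.opNorm_le_bound _ zero_le_one fun f => ?_
  rw [one_mul]
  have h1 := hV t f
  have h2 : eLpNorm (⇑(V t f) : ℝ → ℂ) p volume = eLpNorm (⇑f : ℝ → ℂ) p volume := by
    rw [eLpNorm_congr_ae h1]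
    exact eLpNorm_comp_measurePreserving (MeasureTheory.Lp.aestronglyMeasurable f)
      (measurePreserving_sub_right (volume : Measure ℝ) t)
  rw [MeasureTheory.Lp.norm_def, MeasureTheory.Lp.norm_def, h2]
theorem statement7 (p : ℝ≥0∞) [Fact (1 ≤ p)] (hp : 1 < p) (hp' : p ≠ ∞)
    (V : ℝ → Bop p) (hV : ∀ t : ℝ, IsShiftOp p t (V t)) :
    (∀ A : Efam p, MemF p V A → ∀ B : Efam p,
      (∀ τ : PosR, A τ * B τ = 1 ∧ B τ * A τ = 1) → MemF p V B) ∧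
    (∀ A : Efam p, MemF p V A → ∀ B : Efam p,
      Tendsto (fun τ : PosR => ‖(A * B - 1 : Efam p) τ‖) atTop (nhds 0) →
      Tendsto (fun τ : PosR => ‖(B * A - 1 : Efam p) τ‖) atTop (nhds 0) →
      ∃ B' : Efam p, MemF p V B' ∧
        Tendsto (fun τ : PosR => ‖(A * B' - 1 : Efam p) τ‖) atTop (nhds 0) ∧
        Tendsto (fun τ : PosR => ‖(B' * A - 1 : Efam p) τ‖) atTop (nhds 0)) := by
  classical
  have hV1 : ∀ s : ℝ, V s * V (-s) = 1 := shift_inv V hV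
  have hV2 : ∀ s : ℝ, V (-s) * V s = 1 := fun s => by
    have h := shift_inv V hV (-s); rwa [neg_neg] at h
  have conj_mul : ∀ (s t : ℝ) (X Y : Bop p), V t * V s = 1 → V s * V t = 1 → X * Y = 1 →
      (V s * X * V t) * (V s * Y * V t) = 1 := by
    intro s t X Y h1 h2 hXY
    have e1 : ∀ Z : Bop p, V t * (V s * Z) = Z := fun Z => by
      rw [← mul_assoc, h1, one_mul]
    have e2 : X * (Y * V t) = V t := by rw [← mul_assoc, hXY, one_mul]
    calc (V s * X * V t) * (V s * Y * V t)
        = V s * (X * (V t * (V s * (Y * V t)))) := by simp only [mul_assoc]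
      _ = V s * (X * (Y * V t)) := by rw [e1]
      _ = V s * V t := by rw [e2]
      _ = 1 := h2
  have conj_norm : ∀ (s t : ℝ) (X : Bop p), ‖V s * X * V t‖ ≤ ‖X‖ := by
    intro s t X
    have hs := shift_norm_le V hV s
    have ht := shift_norm_le V hV t
    calc ‖V s * X * V t‖ ≤ ‖V s * X‖ * ‖V t‖ := norm_mul_le _ _
      _ ≤ ‖V s‖ * ‖X‖ * ‖V t‖ :=
          mul_le_mul_of_nonneg_right (norm_mul_le _ _) (norm_nonneg _)
      _ ≤ 1 * ‖X‖ * 1 := by gcongr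
      _ = ‖X‖ := by ring
  have coe_eval : ∀ (X Y : Efam p) (τ : PosR), (X * Y - 1 : Efam p) τ = X τ * Y τ - 1 := by
    intro X Y τ
    calc (X * Y - 1 : Efam p) τ
        = (⇑(X * Y : Efam p) - ⇑(1 : Efam p)) τ := congrFun (lp.coeFn_sub _ _) τ
      _ = (X * Y : Efam p) τ - (1 : Efam p) τ := rfl
      _ = X τ * Y τ - 1 := by
          rw [congrFun (lp.infty_coeFn_mul X Y) τ,
            congrFun (lp.infty_coeFn_one (B := fun _ : PosR => Bop p)) τ]
          rfl
  constructor
  · -- Part 1: F is inverse closed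
    rintro A hA B hAB
    obtain ⟨⟨L1, hL1⟩, ⟨L2, hL2⟩, ⟨L3, hL3⟩⟩ := hA
    have hBb : ∀ τ : PosR, ‖B τ‖ ≤ ‖B‖ := fun τ =>
      lp.norm_apply_le_norm ENNReal.top_ne_zero B τ
    refine ⟨core_lemma _ _ L1 ‖B‖ hL1
        (Eventually.of_forall fun τ => ⟨(hAB τ).1, (hAB τ).2, hBb τ⟩),
      core_lemma _ _ L2 ‖B‖ hL2 (Eventually.of_forall fun τ =>
        ⟨conj_mul _ _ _ _ (hV1 (τ : ℝ)) (hV2 (τ : ℝ)) (hAB τ).1,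
         conj_mul _ _ _ _ (hV1 (τ : ℝ)) (hV2 (τ : ℝ)) (hAB τ).2,
         le_trans (conj_norm _ _ _) (hBb τ)⟩),
      core_lemma _ _ L3 ‖B‖ hL3 (Eventually.of_forall fun τ =>
        ⟨conj_mul _ _ _ _ (hV2 (τ : ℝ)) (hV1 (τ : ℝ)) (hAB τ).1,
         conj_mul _ _ _ _ (hV2 (τ : ℝ)) (hV1 (τ : ℝ)) (hAB τ).2,
         le_trans (conj_norm _ _ _) (hBb τ)⟩)⟩
  · -- Part 2: F/G is inverse closed
    rintro A hA B hAB hBA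
    obtain ⟨⟨L1, hL1⟩, ⟨L2, hL2⟩, ⟨L3, hL3⟩⟩ := hA
    have hone : ‖(1 : Bop p)‖ = 1 := by
      rw [ContinuousLinearMap.one_def]; exact ContinuousLinearMap.norm_id
    set cond : PosR → Prop := fun τ =>
      ‖(A * B - 1 : Efam p) τ‖ < 1/2 ∧ ‖(B * A - 1 : Efam p) τ‖ < 1/2 with hconddef
    have hcond : ∀ᶠ τ : PosR in atTop, cond τ :=
      (hAB.eventually_lt_const (by norm_num)).and (hBA.eventually_lt_const (by norm_num))
    have key : ∀ τ : PosR, cond τ →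
        A τ * Ring.inverse (A τ) = 1 ∧ Ring.inverse (A τ) * A τ = 1 ∧
          ‖Ring.inverse (A τ)‖ ≤ 2 * ‖B‖ := by
      intro τ hc
      obtain ⟨hc1, hc2⟩ := hc
      rw [coe_eval A B τ] at hc1
      rw [coe_eval B A τ] at hc2
      have hBb : ‖B τ‖ ≤ ‖B‖ := lp.norm_apply_le_norm ENNReal.top_ne_zero B τ
      have hu1 : ‖(1 : Bop p) - A τ * B τ‖ < 1 := by rw [norm_sub_rev]; linarith
      have hv1 : ‖(1 : Bop p) - B τ * A τ‖ < 1 := by rw [norm_sub_rev]; linarith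
      set w : (Bop p)ˣ := Units.oneSub ((1 : Bop p) - A τ * B τ) hu1 with hwdef
      set v : (Bop p)ˣ := Units.oneSub ((1 : Bop p) - B τ * A τ) hv1 with hvdef
      have hwv : (w : Bop p) = A τ * B τ := by
        rw [hwdef, Units.val_oneSub, sub_sub_cancel]
      have hvv : (v : Bop p) = B τ * A τ := by
        rw [hvdef, Units.val_oneSub, sub_sub_cancel]
      -- norm bound for w⁻¹
      have hinv_eq : ((w⁻¹ : (Bop p)ˣ) : Bop p)
          = 1 + ((w⁻¹ : (Bop p)ˣ) : Bop p) * ((1 : Bop p) - A τ * B τ) := by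
        rw [mul_sub, mul_one, ← hwv, w.inv_mul]
        abel
      have hn2 : ‖((w⁻¹ : (Bop p)ˣ) : Bop p)‖ ≤ 2 := by
        have hd : ‖(1 : Bop p) - A τ * B τ‖ ≤ 1/2 := by rw [norm_sub_rev]; linarith
        have hmul : ‖((w⁻¹ : (Bop p)ˣ) : Bop p) * ((1 : Bop p) - A τ * B τ)‖
            ≤ ‖((w⁻¹ : (Bop p)ˣ) : Bop p)‖ * (1/2) :=
          le_trans (norm_mul_le _ _) (mul_le_mul_of_nonneg_left hd (norm_nonneg _))
        have hb : ‖((w⁻¹ : (Bop p)ˣ) : Bop p)‖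
            ≤ ‖(1 : Bop p)‖ + ‖((w⁻¹ : (Bop p)ˣ) : Bop p) * ((1 : Bop p) - A τ * B τ)‖ := by
          conv_lhs => rw [hinv_eq]
          exact norm_add_le _ _
        rw [hone] at hb
        linarith
      -- one-sided inverses
      set r : Bop p := B τ * ((w⁻¹ : (Bop p)ˣ) : Bop p) with hrdef
      set l : Bop p := ((v⁻¹ : (Bop p)ˣ) : Bop p) * B τ with hldef
      have hr : A τ * r = 1 := by
        rw [hrdef, ← mul_assoc, ← hwv, w.mul_inv]
      have hl : l * A τ = 1 := by
        rw [hldef, mul_assoc, ← hvv, v.inv_mul]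
      have hlr : l = r := by
        calc l = l * (A τ * r) := by rw [hr, mul_one]
          _ = (l * A τ) * r := (mul_assoc _ _ _).symm
          _ = r := by rw [hl, one_mul]
      have hra : r * A τ = 1 := by rw [← hlr]; exact hl
      have hRinv : Ring.inverse (A τ) = r := by
        have ha : IsUnit (A τ) := ⟨⟨A τ, r, hr, hra⟩, rfl⟩
        obtain ⟨a, ha'⟩ := ha
        rw [← ha', Ring.inverse_unit a]
        -- ↑a⁻¹ = r
        have : (a : Bop p) * r = 1 := by rw [ha']; exact hr
        calc ((a⁻¹ : (Bop p)ˣ) : Bop p) = ↑a⁻¹ * ((a : Bop p) * r) := by rw [this, mul_one]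
          _ = (↑a⁻¹ * (a : Bop p)) * r := by rw [mul_assoc]
          _ = r := by rw [a.inv_mul, one_mul]
      refine ⟨by rw [hRinv]; exact hr, by rw [hRinv]; exact hra, ?_⟩
      rw [hRinv, hrdef]
      calc ‖B τ * ((w⁻¹ : (Bop p)ˣ) : Bop p)‖
          ≤ ‖B τ‖ * ‖((w⁻¹ : (Bop p)ˣ) : Bop p)‖ := norm_mul_le _ _
        _ ≤ ‖B‖ * 2 := mul_le_mul hBb hn2 (norm_nonneg _) (norm_nonneg _)
        _ = 2 * ‖B‖ := mul_comm _ _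
    -- construct the family B'
    set B'f : PosR → Bop p := fun τ => if cond τ then Ring.inverse (A τ) else 0 with hB'fdef
    have hB'bdd : ∀ τ : PosR, ‖B'f τ‖ ≤ 2 * ‖B‖ := by
      intro τ
      by_cases hc : cond τ
      · rw [hB'fdef]; simp only [if_pos hc]; exact (key τ hc).2.2
      · rw [hB'fdef]; simp only [if_neg hc, norm_zero]; positivity
    have hmem : Memℓp B'f ∞ := memℓp_infty ⟨2 * ‖B‖, by rintro x ⟨τ, rfl⟩; exact hB'bdd τ⟩
    set B' : Efam p := ⟨B'f, hmem⟩ with hB'def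
    have hB'app : ∀ τ : PosR, B' τ = B'f τ := fun τ => rfl
    refine ⟨B', ?_, ?_, ?_⟩
    case _ =>
      -- MemF
      have hEv : ∀ᶠ τ : PosR in atTop,
          A τ * B'f τ = 1 ∧ B'f τ * A τ = 1 ∧ ‖B'f τ‖ ≤ 2 * ‖B‖ := by
        filter_upwards [hcond] with τ hc
        rw [hB'fdef]; simp only [if_pos hc]
        exact key τ hc
      refine ⟨core_lemma _ _ L1 (2 * ‖B‖) hL1 hEv,
        core_lemma _ _ L2 (2 * ‖B‖) hL2 ?_,
        core_lemma _ _ L3 (2 * ‖B‖) hL3 ?_⟩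
      · filter_upwards [hEv] with τ h
        exact ⟨conj_mul _ _ _ _ (hV1 (τ : ℝ)) (hV2 (τ : ℝ)) h.1,
          conj_mul _ _ _ _ (hV1 (τ : ℝ)) (hV2 (τ : ℝ)) h.2.1,
          le_trans (conj_norm _ _ _) h.2.2⟩
      · filter_upwards [hEv] with τ h
        exact ⟨conj_mul _ _ _ _ (hV2 (τ : ℝ)) (hV1 (τ : ℝ)) h.1,
          conj_mul _ _ _ _ (hV2 (τ : ℝ)) (hV1 (τ : ℝ)) h.2.1,
          le_trans (conj_norm _ _ _) h.2.2⟩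
    case _ =>
      have hz : ∀ᶠ τ : PosR in atTop,
          (0 : ℝ) = ‖(A * B' - 1 : Efam p) τ‖ := by
        filter_upwards [hcond] with τ hc
        rw [coe_eval]
        have : A τ * B'f τ = 1 := by
          rw [hB'fdef]; simp only [if_pos hc]; exact (key τ hc).1
        rw [hB'app τ, this, sub_self, norm_zero]
      exact (tendsto_const_nhds (x := (0:ℝ))).congr' hz
    case _ =>
      have hz : ∀ᶠ τ : PosR in atTop,
          (0 : ℝ) = ‖(B' * A - 1 : Efam p) τ‖ := by
        filter_upwards [hcond] with τ hc
        rw [coe_eval]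
        have : B'f τ * A τ = 1 := by
          rw [hB'fdef]; simp only [if_pos hc]; exact (key τ hc).2.1
        rw [hB'app τ, this, sub_self, norm_zero]
      exact (tendsto_const_nhds (x := (0:ℝ))).congr' hz

end
end
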